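/- For every n > 6, the cycle and path satisfy φ(C_n) ≥ φ(P_{n-1}) + 2. -/

import Mathlib

open SimpleGraph

/-- A dissociation set: a set of vertices inducing a subgraph of maximum degree at most 1,
i.e., every vertex of `S` has at most one neighbour inside `S`. -/
def IsDissoc {V : Type*} (G : SimpleGraph V) (S : Set V) : Prop :=
  ∀ v ∈ S, {u | u ∈ S ∧ G.Adj v u}.Subsingleton

/-- A maximal dissociation set: a dissociation set not properly contained in another one. -/
def IsMaxDissoc {V : Type*} (G : SimpleGraph V) (S : Set V) : Prop :=
  IsDissoc G S ∧ ∀ T : Set V, IsDissoc G T → S ⊆ T → S = T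

/-- `phi G` is the number of maximal dissociation sets of `G`. -/
noncomputable def phi {V : Type*} (G : SimpleGraph V) : ℕ :=
  {S : Set V | IsMaxDissoc G S}.ncard

/-- The number of maximal dissociation sets of `G` not containing `u`. -/
noncomputable def phiNot {V : Type*} (G : SimpleGraph V) (u : V) : ℕ :=
  {S : Set V | IsMaxDissoc G S ∧ u ∉ S}.ncard

/-- The number of maximal dissociation sets `S` of `G` with `u ∈ S` and
`u` of degree 0 in the subgraph induced by `S`. -/
noncomputable def phi0 {V : Type*} (G : SimpleGraph V) (u : V) : ℕ :=
  {S : Set V | IsMaxDissoc G S ∧ u ∈ S ∧ ∀ x ∈ S, ¬ G.Adj u x}.ncard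

/-- The number of maximal dissociation sets `S` of `G` with `u ∈ S` and
`u` of degree 1 in the subgraph induced by `S`. -/
noncomputable def phi1 {V : Type*} (G : SimpleGraph V) (u : V) : ℕ :=
  {S : Set V | IsMaxDissoc G S ∧ u ∈ S ∧ ∃! x, x ∈ S ∧ G.Adj u x}.ncard

/-- A unicyclic graph: a connected graph whose number of edges equals its number of vertices
(equivalently, a connected graph with exactly one cycle). -/
def IsUnicyclic {V : Type*} [Fintype V] (G : SimpleGraph V) : Prop :=
  G.Connected ∧ G.edgeSet.ncard = Fintype.card V

/-- The tree `T(p,q)` (for `q ≤ p`): obtained from the star `K_{1,p}` by subdividing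
exactly `q` of its edges.  The centre is `Sum.inl ()`, the `p` neighbours of the centre are
`Sum.inr (Sum.inl i)`, and for `j < q` the vertex `Sum.inr (Sum.inr j)` is the subdivision
pendant attached to the `j`-th neighbour.  It has `1 + p + q` vertices. -/
def treeT (p q : ℕ) (h : q ≤ p) : SimpleGraph (Unit ⊕ Fin p ⊕ Fin q) :=
  SimpleGraph.fromRel fun a b =>
    (∃ i : Fin p, a = Sum.inl () ∧ b = Sum.inr (Sum.inl i)) ∨
    (∃ j : Fin q, a = Sum.inr (Sum.inl (Fin.castLE h j)) ∧ b = Sum.inr (Sum.inr j))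

/-- The unicyclic graph `U(p,q)` (for `q ≤ p`): obtained by identifying one vertex of the
triangle `K₃` with the centre of `T(p,q)`.  The centre is `Sum.inl ()`, the two other triangle
vertices are `Sum.inr (Sum.inl 0)` and `Sum.inr (Sum.inl 1)`, and the copy of `T(p,q)` sits on
the remaining vertices.  It has `3 + p + q` vertices. -/
def graphU (p q : ℕ) (h : q ≤ p) : SimpleGraph (Unit ⊕ Fin 2 ⊕ Fin p ⊕ Fin q) :=
  SimpleGraph.fromRel fun a b =>
    (a = Sum.inl () ∧ b = Sum.inr (Sum.inl 0)) ∨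
    (a = Sum.inl () ∧ b = Sum.inr (Sum.inl 1)) ∨
    (a = Sum.inr (Sum.inl 0) ∧ b = Sum.inr (Sum.inl 1)) ∨
    (∃ i : Fin p, a = Sum.inl () ∧ b = Sum.inr (Sum.inr (Sum.inl i))) ∨
    (∃ j : Fin q, a = Sum.inr (Sum.inr (Sum.inl (Fin.castLE h j))) ∧
      b = Sum.inr (Sum.inr (Sum.inr j)))

/-- The unicyclic graph obtained from the cycle `C_r` by attaching one pendant vertex
`Sum.inr j` to the cycle vertex `Sum.inl (f j)` for each `j : Fin t`.  For injective `f`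
this is a member of the class `𝒰_{r,t}`. -/
def graphUrtF (r t : ℕ) (f : Fin t → Fin r) : SimpleGraph (Fin r ⊕ Fin t) :=
  SimpleGraph.fromRel fun a b =>
    (∃ i j : Fin r, a = Sum.inl i ∧ b = Sum.inl j ∧ (cycleGraph r).Adj i j) ∨
    (∃ j : Fin t, a = Sum.inl (f j) ∧ b = Sum.inr j)

/-- The canonical member `U_{r,t}` of `𝒰_{r,t}` (for `t ≤ r`): the cycle `C_r` with one
pendant vertex attached to each of its first `t` vertices. -/
def graphUrt (r t : ℕ) (h : t ≤ r) : SimpleGraph (Fin r ⊕ Fin t) :=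
  graphUrtF r t (Fin.castLE h)

/-- A caterpillar: a tree in which deleting all vertices of degree 1 leaves a path. -/
def IsCaterpillar {V : Type*} [Fintype V] (G : SimpleGraph V) : Prop :=
  G.IsTree ∧ ∃ m : ℕ,
    Nonempty ((G.induce {v | 2 ≤ (G.neighborSet v).ncard}) ≃g SimpleGraph.pathGraph m)

/-- The graph `G₁` obtained from `U` by adding `k` new pendant vertices
`v₁ = Sum.inr 0, …, v_k = Sum.inr (k-1)`, each adjacent to `w`. -/
def addPendants {V : Type*} (U : SimpleGraph V) (w : V) (k : ℕ) : SimpleGraph (V ⊕ Fin k) :=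
  SimpleGraph.fromRel fun a b =>
    (∃ x y, a = Sum.inl x ∧ b = Sum.inl y ∧ U.Adj x y) ∨
    (∃ j : Fin k, a = Sum.inl w ∧ b = Sum.inr j)

/-- The graph `G₂ = G₁ - w v_k + v₁ v_k`: obtained from `U` by attaching the pendant vertices
`v₁, …, v_{k-1}` to `w` and the vertex `v_k` to `v₁`. -/
def swapPendant {V : Type*} (U : SimpleGraph V) (w : V) (k : ℕ) : SimpleGraph (V ⊕ Fin k) :=
  SimpleGraph.fromRel fun a b =>
    (∃ x y, a = Sum.inl x ∧ b = Sum.inl y ∧ U.Adj x y) ∨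
    (∃ j : Fin k, j.val < k - 1 ∧ a = Sum.inl w ∧ b = Sum.inr j) ∨
    (∃ j₀ j₁ : Fin k, j₀.val = 0 ∧ j₁.val = k - 1 ∧ a = Sum.inr j₀ ∧ b = Sum.inr j₁)

/-- The graph obtained from `H` by attaching a pendant path of length 2 at `w`:
two new vertices `v = Sum.inr 0` and `u = Sum.inr 1` with edges `w v` and `v u`. -/
def addPath2 {V : Type*} (H : SimpleGraph V) (w : V) : SimpleGraph (V ⊕ Fin 2) :=
  SimpleGraph.fromRel fun a b =>
    (∃ x y, a = Sum.inl x ∧ b = Sum.inl y ∧ H.Adj x y) ∨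
    (a = Sum.inl w ∧ b = Sum.inr 0) ∨
    (a = Sum.inr 0 ∧ b = Sum.inr 1)

/-- for `n > 6`, `φ(C_n) ≥ φ(P_{n-1}) + 2`. -/

private lemma dissoc_anti' {V : Type*} {G : SimpleGraph V} {S T : Set V}
    (hT : IsDissoc G T) (h : S ⊆ T) : IsDissoc G S := by
  intro v hv
  exact (hT v (h hv)).anti fun u hu => ⟨h hu.1, hu.2⟩

private lemma exists_maxDissoc' {V : Type*} [Finite V] {G : SimpleGraph V} {D : Set V}
    (hD : IsDissoc G D) : ∃ M, IsMaxDissoc G M ∧ D ⊆ M := by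
  obtain ⟨M, hM, hmax⟩ := Set.Finite.exists_maximalFor id {T : Set V | IsDissoc G T ∧ D ⊆ T}
    (Set.toFinite _) ⟨D, hD, subset_rfl⟩
  exact ⟨M, ⟨hM.1, fun T hT hsub => Set.Subset.antisymm hsub (hmax ⟨hT, hM.2.trans hsub⟩ hsub)⟩, hM.2⟩

private lemma mod_succ_iff' {a b k : ℕ} (ha : a < k) (hb : b < k) :
    (a + 1) % k = b ↔ (a + 1 = b ∨ (a + 1 = k ∧ b = 0)) := by
  rcases Nat.lt_or_ge (a + 1) k with h | h
  · rw [Nat.mod_eq_of_lt h]; omega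
  · have h' : a + 1 = k := by omega
    rw [h', Nat.mod_self]; omega

theorem stmt12 (n : ℕ) (hn : 6 < n) :
    phi (SimpleGraph.pathGraph (n - 1)) + 2 ≤ phi (cycleGraph n) := by
  classical
  obtain ⟨m, rfl⟩ : ∃ m, n = m + 2 := ⟨n - 2, by omega⟩
  have hm : 5 ≤ m := by omega
  show phi (SimpleGraph.pathGraph (m + 1)) + 2 ≤ phi (cycleGraph (m + 2))
  -- value-level characterization of cycle adjacency
  have key : ∀ a b : Fin (m + 2), a - b = 1 ↔
      (b.val + 1 = a.val ∨ (b.val + 1 = m + 2 ∧ a.val = 0)) := by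
    intro a b
    rw [sub_eq_iff_eq_add, Fin.ext_iff]
    have h1 : ((1 : Fin (m + 2)) + b).val = (b.val + 1) % (m + 2) := by
      rw [Fin.val_add, Fin.val_one, Nat.add_comm]
    rw [h1, eq_comm]
    exact mod_succ_iff' b.isLt a.isLt
  have hC : ∀ u v : Fin (m + 2), (cycleGraph (m + 2)).Adj u v ↔
      (u.val + 1 = v.val ∨ v.val + 1 = u.val ∨ (u.val = m + 1 ∧ v.val = 0) ∨
        (v.val = m + 1 ∧ u.val = 0)) := by
    intro u v
    rw [SimpleGraph.cycleGraph_adj, key, key]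
    have := u.isLt; have := v.isLt
    omega
  have hCval : ∀ (a b : ℕ) (ha : a < m + 2) (hb : b < m + 2),
      (a + 1 = b ∨ b + 1 = a ∨ (a = m + 1 ∧ b = 0) ∨ (b = m + 1 ∧ a = 0)) →
      (cycleGraph (m + 2)).Adj ⟨a, ha⟩ ⟨b, hb⟩ := by
    intro a b ha hb h
    exact (hC _ _).mpr h
  -- adjacency transfer along castSucc
  have hEC : ∀ i j : Fin (m + 1), (cycleGraph (m + 2)).Adj i.castSucc j.castSucc ↔
      (SimpleGraph.pathGraph (m + 1)).Adj i j := by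
    intro i j
    rw [hC, SimpleGraph.pathGraph_adj]
    have h1 : (i.castSucc : Fin (m + 2)).val = i.val := rfl
    have h2 : (j.castSucc : Fin (m + 2)).val = j.val := rfl
    rw [h1, h2]
    have := i.isLt; have := j.isLt
    omega
  have hnotmem : ∀ S : Set (Fin (m + 1)),
      (⟨m + 1, by omega⟩ : Fin (m + 2)) ∉ Fin.castSucc '' S := by
    rintro S ⟨x, -, hx⟩
    have h1 : x.val = m + 1 := congrArg Fin.val hx
    have := x.isLt
    omega
  have htrans : ∀ S : Set (Fin (m + 1)),
      IsDissoc (SimpleGraph.pathGraph (m + 1)) S ↔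
      IsDissoc (cycleGraph (m + 2)) (Fin.castSucc '' S) := by
    intro S
    constructor
    · rintro h v' ⟨v, hv, rfl⟩ u1 hu1 u2 hu2
      obtain ⟨⟨w1, hw1, rfl⟩, hadj1⟩ := hu1
      obtain ⟨⟨w2, hw2, rfl⟩, hadj2⟩ := hu2
      have := h v hv ⟨hw1, (hEC v w1).mp hadj1⟩ ⟨hw2, (hEC v w2).mp hadj2⟩
      rw [this]
    · rintro h v hv u1 hu1 u2 hu2
      have := h (Fin.castSucc v) ⟨v, hv, rfl⟩
        ⟨⟨u1, hu1.1, rfl⟩, (hEC v u1).mpr hu1.2⟩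
        ⟨⟨u2, hu2.1, rfl⟩, (hEC v u2).mpr hu2.2⟩
      exact Fin.castSucc_injective _ this
  -- construction of the two extra maximal dissociation sets
  have hD1 : IsDissoc (cycleGraph (m + 2))
      ({⟨m + 1, by omega⟩, ⟨m, by omega⟩, ⟨m - 3, by omega⟩, ⟨m - 4, by omega⟩} :
        Set (Fin (m + 2))) := by
    intro v hv u1 hu1 u2 hu2
    obtain ⟨hu1m, hu1a⟩ := hu1
    obtain ⟨hu2m, hu2a⟩ := hu2
    rw [hC] at hu1a hu2a
    simp only [Set.mem_insert_iff, Set.mem_singleton_iff, Fin.ext_iff] at hv hu1m hu2m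
    have h1 := u1.isLt; have h2 := u2.isLt; have h3 := v.isLt
    apply Fin.ext
    omega
  obtain ⟨M1, hM1max, hM1sub⟩ := exists_maxDissoc' hD1
  have hD2 : IsDissoc (cycleGraph (m + 2))
      ({⟨m + 1, by omega⟩, ⟨0, by omega⟩, ⟨3, by omega⟩, ⟨4, by omega⟩} :
        Set (Fin (m + 2))) := by
    intro v hv u1 hu1 u2 hu2
    obtain ⟨hu1m, hu1a⟩ := hu1
    obtain ⟨hu2m, hu2a⟩ := hu2
    rw [hC] at hu1a hu2a
    simp only [Set.mem_insert_iff, Set.mem_singleton_iff, Fin.ext_iff] at hv hu1m hu2m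
    have h1 := u1.isLt; have h2 := u2.isLt; have h3 := v.isLt
    apply Fin.ext
    omega
  obtain ⟨M2, hM2max, hM2sub⟩ := exists_maxDissoc' hD2
  -- membership facts
  have h1L : (⟨m + 1, by omega⟩ : Fin (m + 2)) ∈ M1 := hM1sub (by left; rfl)
  have h1m : (⟨m, by omega⟩ : Fin (m + 2)) ∈ M1 := hM1sub (by right; left; rfl)
  have h1m3 : (⟨m - 3, by omega⟩ : Fin (m + 2)) ∈ M1 := hM1sub (by right; right; left; rfl)
  have h1m4 : (⟨m - 4, by omega⟩ : Fin (m + 2)) ∈ M1 := hM1sub (by right; right; right; rfl)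
  have h2L : (⟨m + 1, by omega⟩ : Fin (m + 2)) ∈ M2 := hM2sub (by left; rfl)
  have h20 : (⟨0, by omega⟩ : Fin (m + 2)) ∈ M2 := hM2sub (by right; left; rfl)
  have h23 : (⟨3, by omega⟩ : Fin (m + 2)) ∈ M2 := hM2sub (by right; right; left; rfl)
  have h24 : (⟨4, by omega⟩ : Fin (m + 2)) ∈ M2 := hM2sub (by right; right; right; rfl)
  -- forced exclusions
  have hx1 : (⟨m - 1, by omega⟩ : Fin (m + 2)) ∉ M1 := by
    intro hmem
    have heq := hM1max.1 (⟨m, by omega⟩ : Fin (m + 2)) h1m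
      ⟨h1L, hCval m (m + 1) (by omega) (by omega) (by omega)⟩
      ⟨hmem, hCval m (m - 1) (by omega) (by omega) (by omega)⟩
    exact (by omega : ¬(m + 1 = m - 1)) (congrArg Fin.val heq)
  have hx2 : (⟨m - 2, by omega⟩ : Fin (m + 2)) ∉ M1 := by
    intro hmem
    have heq := hM1max.1 (⟨m - 3, by omega⟩ : Fin (m + 2)) h1m3
      ⟨hmem, hCval (m - 3) (m - 2) (by omega) (by omega) (by omega)⟩
      ⟨h1m4, hCval (m - 3) (m - 4) (by omega) (by omega) (by omega)⟩
    exact (by omega : ¬(m - 2 = m - 4)) (congrArg Fin.val heq)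
  have hy1 : (⟨1, by omega⟩ : Fin (m + 2)) ∉ M2 := by
    intro hmem
    have heq := hM2max.1 (⟨0, by omega⟩ : Fin (m + 2)) h20
      ⟨h2L, hCval 0 (m + 1) (by omega) (by omega) (by omega)⟩
      ⟨hmem, hCval 0 1 (by omega) (by omega) (by omega)⟩
    exact (by omega : ¬(m + 1 = 1)) (congrArg Fin.val heq)
  have hy2 : (⟨2, by omega⟩ : Fin (m + 2)) ∉ M2 := by
    intro hmem
    have heq := hM2max.1 (⟨3, by omega⟩ : Fin (m + 2)) h23
      ⟨h24, hCval 3 4 (by omega) (by omega) (by omega)⟩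
      ⟨hmem, hCval 3 2 (by omega) (by omega) (by omega)⟩
    exact (by omega : ¬(4 = 2)) (congrArg Fin.val heq)
  have hm2 : (⟨m, by omega⟩ : Fin (m + 2)) ∉ M2 := by
    intro hmem
    have heq := hM2max.1 (⟨m + 1, by omega⟩ : Fin (m + 2)) h2L
      ⟨h20, hCval (m + 1) 0 (by omega) (by omega) (by omega)⟩
      ⟨hmem, hCval (m + 1) m (by omega) (by omega) (by omega)⟩
    exact (by omega : ¬((0 : ℕ) = m)) (congrArg Fin.val heq)
  have hM1M2 : M1 ≠ M2 := fun h => hm2 (h ▸ h1m)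
  -- extension principle
  have hext : ∀ (S : Set (Fin (m + 1))) (T : Set (Fin (m + 2))),
      IsMaxDissoc (SimpleGraph.pathGraph (m + 1)) S → IsDissoc (cycleGraph (m + 2)) T →
      Fin.castSucc '' S ⊆ T → ∀ w ∈ T, w ≠ (⟨m + 1, by omega⟩ : Fin (m + 2)) →
      w ∈ Fin.castSucc '' S := by
    intro S T hS hT hsub w hw hwne
    have hwlt : w.val < m + 1 := by
      have := w.isLt
      rcases Nat.lt_or_ge w.val (m + 1) with h | h
      · exact h
      · exact absurd (Fin.ext (by omega : w.val = m + 1)) hwne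
    by_cases hvS : (⟨w.val, hwlt⟩ : Fin (m + 1)) ∈ S
    · exact ⟨⟨w.val, hwlt⟩, hvS, Fin.ext rfl⟩
    · exfalso
      have himg : Fin.castSucc '' insert (⟨w.val, hwlt⟩ : Fin (m + 1)) S ⊆ T := by
        rw [Set.image_insert_eq]
        refine Set.insert_subset_iff.mpr ⟨?_, hsub⟩
        rw [show (Fin.castSucc (⟨w.val, hwlt⟩ : Fin (m + 1))) = w from Fin.ext rfl]
        exact hw
      have hins := dissoc_anti' hT himg
      have heqS := hS.2 _ ((htrans _).mpr hins) (Set.subset_insert _ _)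
      apply hvS
      rw [heqS]
      exact Set.mem_insert _ _
  -- the two special sets are not images
  have hnot1 : ∀ S : Set (Fin (m + 1)), IsMaxDissoc (SimpleGraph.pathGraph (m + 1)) S →
      insert (⟨m + 1, by omega⟩ : Fin (m + 2)) (Fin.castSucc '' S) ≠ M1 := by
    intro S hS heq
    have himg : Fin.castSucc '' S = M1 \ {(⟨m + 1, by omega⟩ : Fin (m + 2))} := by
      rw [← heq, Set.insert_diff_self_of_notMem (hnotmem S)]
    have hN : IsDissoc (cycleGraph (m + 2))
        (insert (⟨m - 1, by omega⟩ : Fin (m + 2))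
          (M1 \ {(⟨m + 1, by omega⟩ : Fin (m + 2))})) := by
      intro v hv u1 hu1 u2 hu2
      obtain ⟨hu1m, hu1a⟩ := hu1
      obtain ⟨hu2m, hu2a⟩ := hu2
      rcases Set.mem_insert_iff.mp hv with rfl | hv'
      · -- v is the new vertex of value m-1
        have keyu : ∀ u, u ∈ insert (⟨m - 1, by omega⟩ : Fin (m + 2))
            (M1 \ {(⟨m + 1, by omega⟩ : Fin (m + 2))}) →
            (cycleGraph (m + 2)).Adj ⟨m - 1, by omega⟩ u → u = (⟨m, by omega⟩ : Fin (m + 2)) := by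
          intro u hu hadj
          have hadj' : (m - 1) + 1 = u.val ∨ u.val + 1 = m - 1 ∨
              (m - 1 = m + 1 ∧ u.val = 0) ∨ (u.val = m + 1 ∧ m - 1 = 0) := (hC _ _).mp hadj
          rcases Set.mem_insert_iff.mp hu with rfl | ⟨huM, hune⟩
          · have h'' : (m - 1) + 1 = m - 1 ∨ (m - 1) + 1 = m - 1 ∨
                (m - 1 = m + 1 ∧ m - 1 = 0) ∨ (m - 1 = m + 1 ∧ m - 1 = 0) := hadj'
            exact absurd h'' (by omega)
          · by_cases hum : u.val = m
            · exact Fin.ext hum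
            · exfalso
              have hul := u.isLt
              have hu2' : u.val = m - 2 := by omega
              rw [show u = (⟨m - 2, by omega⟩ : Fin (m + 2)) from Fin.ext hu2'] at huM
              exact hx2 huM
        rw [keyu u1 hu1m hu1a, keyu u2 hu2m hu2a]
      · obtain ⟨hvM, hvne⟩ := hv'
        by_cases hvm : v.val = m
        · have keyu : ∀ u, u ∈ insert (⟨m - 1, by omega⟩ : Fin (m + 2))
              (M1 \ {(⟨m + 1, by omega⟩ : Fin (m + 2))}) →
              (cycleGraph (m + 2)).Adj v u → u = (⟨m - 1, by omega⟩ : Fin (m + 2)) := by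
            intro u hu hadj
            have hadj' : v.val + 1 = u.val ∨ u.val + 1 = v.val ∨
                (v.val = m + 1 ∧ u.val = 0) ∨ (u.val = m + 1 ∧ v.val = 0) := (hC _ _).mp hadj
            rcases Set.mem_insert_iff.mp hu with rfl | ⟨huM, hune⟩
            · rfl
            · by_cases h9 : u.val = m - 1
              · exact Fin.ext h9
              · exfalso
                have hul := u.isLt
                have : u.val = m + 1 := by omega
                exact hune (Fin.ext this)
          rw [keyu u1 hu1m hu1a, keyu u2 hu2m hu2a]
        · have keyu : ∀ u, u ∈ insert (⟨m - 1, by omega⟩ : Fin (m + 2))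
              (M1 \ {(⟨m + 1, by omega⟩ : Fin (m + 2))}) →
              (cycleGraph (m + 2)).Adj v u → u ∈ M1 := by
            intro u hu hadj
            rcases Set.mem_insert_iff.mp hu with rfl | ⟨huM, _⟩
            · exfalso
              have hadj' : v.val + 1 = m - 1 ∨ (m - 1) + 1 = v.val ∨
                  (v.val = m + 1 ∧ m - 1 = 0) ∨ (m - 1 = m + 1 ∧ v.val = 0) := (hC _ _).mp hadj
              have hvl := v.isLt
              have : v.val = m - 2 ∨ v.val = m + 1 := by omega
              rcases this with h | h
              · rw [show v = (⟨m - 2, by omega⟩ : Fin (m + 2)) from Fin.ext h] at hvM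
                exact hx2 hvM
              · exact hvne (Fin.ext h)
            · exact huM
          exact hM1max.1 v hvM ⟨keyu u1 hu1m hu1a, hu1a⟩ ⟨keyu u2 hu2m hu2a, hu2a⟩
    have hcast : Fin.castSucc (⟨m - 1, by omega⟩ : Fin (m + 1)) =
        (⟨m - 1, by omega⟩ : Fin (m + 2)) := Fin.ext rfl
    have hNdis : IsDissoc (cycleGraph (m + 2))
        (Fin.castSucc '' insert (⟨m - 1, by omega⟩ : Fin (m + 1)) S) := by
      rw [Set.image_insert_eq, himg, hcast]
      exact hN
    have heqS := hS.2 _ ((htrans _).mpr hNdis) (Set.subset_insert _ _)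
    have hxS : (⟨m - 1, by omega⟩ : Fin (m + 1)) ∈ S := by
      rw [heqS]; exact Set.mem_insert _ _
    have : (⟨m - 1, by omega⟩ : Fin (m + 2)) ∈ M1 := by
      have h' := Set.mem_image_of_mem Fin.castSucc hxS
      rw [himg, hcast] at h'
      exact h'.1
    exact hx1 this
  have hnot2 : ∀ S : Set (Fin (m + 1)), IsMaxDissoc (SimpleGraph.pathGraph (m + 1)) S →
      insert (⟨m + 1, by omega⟩ : Fin (m + 2)) (Fin.castSucc '' S) ≠ M2 := by
    intro S hS heq
    have himg : Fin.castSucc '' S = M2 \ {(⟨m + 1, by omega⟩ : Fin (m + 2))} := by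
      rw [← heq, Set.insert_diff_self_of_notMem (hnotmem S)]
    have hN : IsDissoc (cycleGraph (m + 2))
        (insert (⟨1, by omega⟩ : Fin (m + 2))
          (M2 \ {(⟨m + 1, by omega⟩ : Fin (m + 2))})) := by
      intro v hv u1 hu1 u2 hu2
      obtain ⟨hu1m, hu1a⟩ := hu1
      obtain ⟨hu2m, hu2a⟩ := hu2
      rcases Set.mem_insert_iff.mp hv with rfl | hv'
      · have keyu : ∀ u, u ∈ insert (⟨1, by omega⟩ : Fin (m + 2))
            (M2 \ {(⟨m + 1, by omega⟩ : Fin (m + 2))}) →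
            (cycleGraph (m + 2)).Adj ⟨1, by omega⟩ u → u = (⟨0, by omega⟩ : Fin (m + 2)) := by
          intro u hu hadj
          have hadj' : 1 + 1 = u.val ∨ u.val + 1 = 1 ∨
              ((1 : ℕ) = m + 1 ∧ u.val = 0) ∨ (u.val = m + 1 ∧ (1 : ℕ) = 0) := (hC _ _).mp hadj
          rcases Set.mem_insert_iff.mp hu with rfl | ⟨huM, hune⟩
          · have h'' : 1 + 1 = (1 : ℕ) ∨ (1 : ℕ) + 1 = 1 ∨
                ((1 : ℕ) = m + 1 ∧ (1 : ℕ) = 0) ∨ ((1 : ℕ) = m + 1 ∧ (1 : ℕ) = 0) := hadj'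
            exact absurd h'' (by omega)
          · by_cases hum : u.val = 0
            · exact Fin.ext hum
            · exfalso
              have hul := u.isLt
              have hu2' : u.val = 2 := by omega
              rw [show u = (⟨2, by omega⟩ : Fin (m + 2)) from Fin.ext hu2'] at huM
              exact hy2 huM
        rw [keyu u1 hu1m hu1a, keyu u2 hu2m hu2a]
      · obtain ⟨hvM, hvne⟩ := hv'
        by_cases hvm : v.val = 0
        · have keyu : ∀ u, u ∈ insert (⟨1, by omega⟩ : Fin (m + 2))
              (M2 \ {(⟨m + 1, by omega⟩ : Fin (m + 2))}) →
              (cycleGraph (m + 2)).Adj v u → u = (⟨1, by omega⟩ : Fin (m + 2)) := by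
            intro u hu hadj
            have hadj' : v.val + 1 = u.val ∨ u.val + 1 = v.val ∨
                (v.val = m + 1 ∧ u.val = 0) ∨ (u.val = m + 1 ∧ v.val = 0) := (hC _ _).mp hadj
            rcases Set.mem_insert_iff.mp hu with rfl | ⟨huM, hune⟩
            · rfl
            · by_cases h9 : u.val = 1
              · exact Fin.ext h9
              · exfalso
                have hul := u.isLt
                have : u.val = m + 1 := by omega
                exact hune (Fin.ext this)
          rw [keyu u1 hu1m hu1a, keyu u2 hu2m hu2a]
        · have keyu : ∀ u, u ∈ insert (⟨1, by omega⟩ : Fin (m + 2))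
              (M2 \ {(⟨m + 1, by omega⟩ : Fin (m + 2))}) →
              (cycleGraph (m + 2)).Adj v u → u ∈ M2 := by
            intro u hu hadj
            rcases Set.mem_insert_iff.mp hu with rfl | ⟨huM, _⟩
            · exfalso
              have hadj' : v.val + 1 = 1 ∨ (1 : ℕ) + 1 = v.val ∨
                  (v.val = m + 1 ∧ (1 : ℕ) = 0) ∨ ((1 : ℕ) = m + 1 ∧ v.val = 0) := (hC _ _).mp hadj
              have hvl := v.isLt
              have : v.val = 2 := by omega
              rw [show v = (⟨2, by omega⟩ : Fin (m + 2)) from Fin.ext this] at hvM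
              exact hy2 hvM
            · exact huM
          exact hM2max.1 v hvM ⟨keyu u1 hu1m hu1a, hu1a⟩ ⟨keyu u2 hu2m hu2a, hu2a⟩
    have hcast : Fin.castSucc (⟨1, by omega⟩ : Fin (m + 1)) =
        (⟨1, by omega⟩ : Fin (m + 2)) := Fin.ext rfl
    have hNdis : IsDissoc (cycleGraph (m + 2))
        (Fin.castSucc '' insert (⟨1, by omega⟩ : Fin (m + 1)) S) := by
      rw [Set.image_insert_eq, himg, hcast]
      exact hN
    have heqS := hS.2 _ ((htrans _).mpr hNdis) (Set.subset_insert _ _)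
    have hxS : (⟨1, by omega⟩ : Fin (m + 1)) ∈ S := by
      rw [heqS]; exact Set.mem_insert _ _
    have : (⟨1, by omega⟩ : Fin (m + 2)) ∈ M2 := by
      have h' := Set.mem_image_of_mem Fin.castSucc hxS
      rw [himg, hcast] at h'
      exact h'.1
    exact hy1 this
  -- the injection
  set F : Set (Fin (m + 1)) → Set (Fin (m + 2)) := fun S =>
    if IsDissoc (cycleGraph (m + 2)) (insert (⟨m + 1, by omega⟩ : Fin (m + 2)) (Fin.castSucc '' S))
    then insert (⟨m + 1, by omega⟩ : Fin (m + 2)) (Fin.castSucc '' S)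
    else Fin.castSucc '' S with hFdef
  have hFmax : ∀ S, IsMaxDissoc (SimpleGraph.pathGraph (m + 1)) S →
      IsMaxDissoc (cycleGraph (m + 2)) (F S) := by
    intro S hS
    by_cases hd : IsDissoc (cycleGraph (m + 2))
        (insert (⟨m + 1, by omega⟩ : Fin (m + 2)) (Fin.castSucc '' S))
    · rw [hFdef]; simp only [if_pos hd]
      refine ⟨hd, fun T hT hTsub => Set.Subset.antisymm hTsub fun w hw => ?_⟩
      by_cases hwl : w = (⟨m + 1, by omega⟩ : Fin (m + 2))
      · rw [hwl]; exact Set.mem_insert _ _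
      · exact Set.mem_insert_of_mem _
          (hext S T hS hT ((Set.subset_insert _ _).trans hTsub) w hw hwl)
    · rw [hFdef]; simp only [if_neg hd]
      refine ⟨(htrans S).mp hS.1, fun T hT hTsub => Set.Subset.antisymm hTsub fun w hw => ?_⟩
      by_cases hwl : w = (⟨m + 1, by omega⟩ : Fin (m + 2))
      · exfalso
        exact hd (dissoc_anti' hT (Set.insert_subset_iff.mpr ⟨hwl ▸ hw, hTsub⟩))
      · exact hext S T hS hT hTsub w hw hwl
  have hFdiff : ∀ S : Set (Fin (m + 1)),
      F S \ {(⟨m + 1, by omega⟩ : Fin (m + 2))} = Fin.castSucc '' S := by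
    intro S
    rw [hFdef]
    by_cases hd : IsDissoc (cycleGraph (m + 2))
        (insert (⟨m + 1, by omega⟩ : Fin (m + 2)) (Fin.castSucc '' S))
    · simp only [if_pos hd]
      exact Set.insert_diff_self_of_notMem (hnotmem S)
    · simp only [if_neg hd]
      exact Set.diff_singleton_eq_self (hnotmem S)
  have hmaps : ∀ S ∈ {S : Set (Fin (m + 1)) | IsMaxDissoc (SimpleGraph.pathGraph (m + 1)) S},
      F S ∈ {T : Set (Fin (m + 2)) | IsMaxDissoc (cycleGraph (m + 2)) T} \ ({M1, M2} : Set _) := by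
    intro S hS
    refine ⟨hFmax S hS, fun hmem => ?_⟩
    have hFcases : F S = insert (⟨m + 1, by omega⟩ : Fin (m + 2)) (Fin.castSucc '' S) ∨
        F S = Fin.castSucc '' S := by
      by_cases hd : IsDissoc (cycleGraph (m + 2))
          (insert (⟨m + 1, by omega⟩ : Fin (m + 2)) (Fin.castSucc '' S))
      · exact Or.inl (if_pos hd)
      · exact Or.inr (if_neg hd)
    rcases hmem with h | h
    · rcases hFcases with hc | hc
      · exact hnot1 S hS (hc ▸ h)
      · exact hnotmem S (by rw [hc] at h; exact h ▸ h1L)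
    · rcases hFcases with hc | hc
      · exact hnot2 S hS (hc ▸ (Set.mem_singleton_iff.mp h))
      · exact hnotmem S (by rw [hc] at h; exact (Set.mem_singleton_iff.mp h) ▸ h2L)
  have hinjF : Set.InjOn F {S : Set (Fin (m + 1)) | IsMaxDissoc (SimpleGraph.pathGraph (m + 1)) S} := by
    intro S hS S' hS' heq
    have h1 : Fin.castSucc '' S = Fin.castSucc '' S' := by
      rw [← hFdiff S, ← hFdiff S', heq]
    exact (Fin.castSucc_injective (m + 1)).image_injective h1
  have hBfin : ({T : Set (Fin (m + 2)) | IsMaxDissoc (cycleGraph (m + 2)) T}).Finite :=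
    Set.toFinite _
  have hsub2 : ({M1, M2} : Set (Set (Fin (m + 2)))) ⊆
      {T : Set (Fin (m + 2)) | IsMaxDissoc (cycleGraph (m + 2)) T} := by
    rintro T (rfl | rfl)
    · exact hM1max
    · exact hM2max
  calc phi (SimpleGraph.pathGraph (m + 1)) + 2
      = ({S : Set (Fin (m + 1)) | IsMaxDissoc (SimpleGraph.pathGraph (m + 1)) S}).ncard + 2 := rfl
    _ ≤ (({T : Set (Fin (m + 2)) | IsMaxDissoc (cycleGraph (m + 2)) T} \
          ({M1, M2} : Set _)).ncard) + 2 := by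
        exact Nat.add_le_add_right
          (Set.ncard_le_ncard_of_injOn F hmaps hinjF hBfin.diff) 2
    _ = ({T : Set (Fin (m + 2)) | IsMaxDissoc (cycleGraph (m + 2)) T} \
          ({M1, M2} : Set _)).ncard + (({M1, M2} : Set (Set (Fin (m + 2))))).ncard := by
        rw [Set.ncard_pair hM1M2]
    _ = ({T : Set (Fin (m + 2)) | IsMaxDissoc (cycleGraph (m + 2)) T}).ncard :=
        Set.ncard_diff_add_ncard_of_subset hsub2 hBfin
    _ = phi (cycleGraph (m + 2)) := rfl
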